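/- arXiv:2412.00399 — 2 statements merged into one kernel-verified Lean document; each statement's English description precedes it below -/
import Mathlib

section
/- (Hochster.) Fix positive integers r_1, r_2 and an integer f_0 ≥ r_1, and consider the length-2 format (f_0, r_1 + r_2, r_2). Then there exists a universal pair (R_univ, F^univ) for this format over ℂ: a commutative ℂ-algebra R_univ together with an acyclic complex F^univ : 0 → R_univ^{r_2} → R_univ^{r_1 + r_2} → R_univ^{f_0} such that for every commutative ℂ-algebra S and every acyclic complex G of finite free S-modules of the same format, there exists a unique ℂ-algebra homomorphism R_univ → S specializing F^univ to G. -/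
set_option maxHeartbeats 1000000
set_option synthInstance.maxHeartbeats 1000000


/-!
STATEMENT 15 (Hochster): For the length-2 format (f₀, r₁ + r₂, r₂) (with r₁, r₂ ≥ 1,
f₀ ≥ r₁) there exists a universal pair over ℂ.
-/

/-- A complex `0 → R^{f n} → ⋯ → R^{f 1} → R^{f 0}` of finite free `R`-modules, encoded by
its matrices of differentials; `d k` is the matrix of the differential `F_{k+1} → F_k`.
(A format of length `n` is encoded by a function `f : ℕ → ℕ` vanishing above `n`.) -/
structure MatrixComplex (R : Type) [CommRing R] (f : ℕ → ℕ) where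
  d : ∀ k : ℕ, Matrix (Fin (f k)) (Fin (f (k + 1))) R
  comp_eq_zero : ∀ k : ℕ, d k * d (k + 1) = 0

/-- Acyclicity: exactness at `F_k` for all `k = 1, …, n`. -/
def MatrixComplex.IsAcyclic {R : Type} [CommRing R] {f : ℕ → ℕ} (n : ℕ)
    (C : MatrixComplex R f) : Prop :=
  ∀ k : ℕ, k < n →
    LinearMap.ker (C.d k).mulVecLin = LinearMap.range (C.d (k + 1)).mulVecLin

/-- A ring homomorphism `φ : R → S` specializes `C` to `C'` if applying `φ` entrywise to the
differentials of `C` yields the differentials of `C'`. -/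
def SpecializesCx {R S : Type} [CommRing R] [CommRing S] {f : ℕ → ℕ}
    (φ : R →+* S) (C : MatrixComplex R f) (C' : MatrixComplex S f) : Prop :=
  ∀ k : ℕ, (C.d k).map φ = C'.d k

/-- A commutative ℂ-algebra equipped with a complex of finite free modules of format `f`. -/
structure AlgebraComplexPair (f : ℕ → ℕ) : Type 1 where
  carrier : Type
  [commRing : CommRing carrier]
  [algebra : Algebra ℂ carrier]
  complex : MatrixComplex carrier f

attribute [instance] AlgebraComplexPair.commRing AlgebraComplexPair.algebra

/-- The format `(f₀, r₁ + r₂, r₂)` of length 2. -/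
def hochsterFormat (f₀ r₁ r₂ : ℕ) : ℕ → ℕ :=
  fun k => if k = 0 then f₀ else if k = 1 then r₁ + r₂ else if k = 2 then r₂ else 0

set_option linter.unusedSectionVars false
namespace HochAux

open Matrix

variable {f₀ r₁ r₂ : ℕ}

lemma fmt_ge3 (f₀ r₁ r₂ : ℕ) {n : ℕ} (hn : 3 ≤ n) : hochsterFormat f₀ r₁ r₂ n = 0 := by
  have h0 : n ≠ 0 := by omega
  have h1 : n ≠ 1 := by omega
  have h2 : n ≠ 2 := by omega
  simp [hochsterFormat, h0, h1, h2]

variable {R S : Type} [CommRing R] [CommRing S]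

lemma map_mulVec' (φ : R →+* S) {m n : ℕ} (M : Matrix (Fin m) (Fin n) R) (v : Fin n → R) :
    (M.map φ) *ᵥ (φ ∘ v) = φ ∘ (M *ᵥ v) := by
  funext i
  exact (RingHom.map_mulVec φ M v i).symm

lemma matrix_map_inj {m n : Type*} {φ : R →+* S} (hφ : Function.Injective φ)
    {M N : Matrix m n R} (h : M.map φ = N.map φ) : M = N := by
  ext i j
  apply hφ
  have := congrFun (congrFun h i) j
  simpa [Matrix.map_apply] using this

lemma d2_mulVec_eq_zero (C : MatrixComplex R (hochsterFormat f₀ r₁ r₂))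
    (u : Fin (hochsterFormat f₀ r₁ r₂ 3) → R) : C.d 2 *ᵥ u = 0 := by
  haveI : IsEmpty (Fin (hochsterFormat f₀ r₁ r₂ 3)) := by
    rw [fmt_ge3 f₀ r₁ r₂ (le_refl 3)]
    infer_instance
  funext i
  simp [Matrix.mulVec, dotProduct]

/-- The concrete content of acyclicity for this format. -/
def Good (C : MatrixComplex R (hochsterFormat f₀ r₁ r₂)) : Prop :=
  (∀ w : Fin (hochsterFormat f₀ r₁ r₂ 2) → R, C.d 1 *ᵥ w = 0 → w = 0) ∧
  (∀ v : Fin (hochsterFormat f₀ r₁ r₂ 1) → R, C.d 0 *ᵥ v = 0 → ∃ w, C.d 1 *ᵥ w = v)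

lemma good_iff_acyclic (C : MatrixComplex R (hochsterFormat f₀ r₁ r₂)) :
    Good C ↔ C.IsAcyclic 2 := by
  constructor
  · rintro ⟨hinj, hex⟩ k hk
    interval_cases k
    · ext v
      simp only [LinearMap.mem_ker, LinearMap.mem_range, Matrix.mulVecLin_apply]
      constructor
      · exact hex v
      · rintro ⟨w, rfl⟩
        rw [Matrix.mulVec_mulVec, C.comp_eq_zero 0, Matrix.zero_mulVec]
    · ext w
      simp only [LinearMap.mem_ker, LinearMap.mem_range, Matrix.mulVecLin_apply]
      constructor
      · intro h
        exact ⟨0, by rw [d2_mulVec_eq_zero, hinj w h]⟩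
      · rintro ⟨u, rfl⟩
        rw [d2_mulVec_eq_zero, Matrix.mulVec_zero]
  · intro h
    constructor
    · intro w hw
      have : w ∈ LinearMap.ker (C.d 1).mulVecLin := by
        simpa [LinearMap.mem_ker, Matrix.mulVecLin_apply] using hw
      rw [h 1 (by norm_num)] at this
      obtain ⟨u, hu⟩ := this
      rw [← hu, Matrix.mulVecLin_apply, d2_mulVec_eq_zero]
    · intro v hv
      have : v ∈ LinearMap.ker (C.d 0).mulVecLin := by
        simpa [LinearMap.mem_ker, Matrix.mulVecLin_apply] using hv
      rw [h 0 (by norm_num)] at this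
      obtain ⟨w, hw⟩ := this
      exact ⟨w, by simpa [Matrix.mulVecLin_apply] using hw⟩

lemma specializes_of (φ : R →+* S) (C : MatrixComplex R (hochsterFormat f₀ r₁ r₂))
    (C' : MatrixComplex S (hochsterFormat f₀ r₁ r₂))
    (h0 : (C.d 0).map φ = C'.d 0) (h1 : (C.d 1).map φ = C'.d 1) :
    SpecializesCx φ C C' := by
  intro k
  match k with
  | 0 => exact h0
  | 1 => exact h1
  | (k+2) =>
    ext i j
    have he : IsEmpty (Fin (hochsterFormat f₀ r₁ r₂ (k + 2 + 1))) := by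
      rw [fmt_ge3 f₀ r₁ r₂ (show 3 ≤ k + 2 + 1 by omega)]
      infer_instance
    exact he.elim j

section Constructions

variable [Algebra ℂ R] [Algebra ℂ S]

/-- Restriction of a complex to a subalgebra containing all entries. -/
def restrictCx (C : MatrixComplex R (hochsterFormat f₀ r₁ r₂)) (A : Subalgebra ℂ R)
    (h : ∀ k i j, C.d k i j ∈ A) : MatrixComplex (↥A) (hochsterFormat f₀ r₁ r₂) where
  d k := fun i j => ⟨C.d k i j, h k i j⟩
  comp_eq_zero k := by
    apply matrix_map_inj (φ := (A.val : ↥A →+* R)) (fun a b hab => Subtype.ext hab)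
    erw [Matrix.map_mul, Matrix.map_zero _ (map_zero _)]
    have h1 : (Matrix.map (fun i j => (⟨C.d k i j, h k i j⟩ : ↥A)) (A.val : ↥A →+* R))
        = C.d k := rfl
    have h2 : (Matrix.map (fun i j => (⟨C.d (k+1) i j, h (k+1) i j⟩ : ↥A)) (A.val : ↥A →+* R))
        = C.d (k+1) := rfl
    rw [h1, h2, C.comp_eq_zero k]

@[simp] lemma restrictCx_map_val (C : MatrixComplex R (hochsterFormat f₀ r₁ r₂))
    (A : Subalgebra ℂ R) (h : ∀ k i j, C.d k i j ∈ A) (k : ℕ) :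
    ((restrictCx C A h).d k).map (A.val : ↥A →+* R) = C.d k := rfl

/-- Pushforward of a complex along a ring homomorphism. -/
def mapCx (C : MatrixComplex R (hochsterFormat f₀ r₁ r₂)) (φ : R →+* S) :
    MatrixComplex S (hochsterFormat f₀ r₁ r₂) where
  d k := (C.d k).map φ
  comp_eq_zero k := by
    rw [← Matrix.map_mul, C.comp_eq_zero k, Matrix.map_zero _ (map_zero _)]

/-- Product of a family of complexes. -/
def piCx {ι : Type} {Rs : ι → Type} [∀ i, CommRing (Rs i)]
    (C : ∀ i, MatrixComplex (Rs i) (hochsterFormat f₀ r₁ r₂)) :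
    MatrixComplex (∀ i, Rs i) (hochsterFormat f₀ r₁ r₂) where
  d k := fun a b => fun i => (C i).d k a b
  comp_eq_zero k := by
    apply Matrix.ext
    intro a b
    funext i
    have h2 : ((C i).d k * (C i).d (k+1)) a b = 0 := by rw [(C i).comp_eq_zero k]; rfl
    erw [Matrix.mul_apply]
    simpa [Matrix.mul_apply, Finset.sum_apply] using h2

lemma piCx_mulVec {ι : Type} {Rs : ι → Type} [∀ i, CommRing (Rs i)]
    (C : ∀ i, MatrixComplex (Rs i) (hochsterFormat f₀ r₁ r₂)) (k : ℕ)
    (w : Fin (hochsterFormat f₀ r₁ r₂ (k+1)) → (∀ i, Rs i)) (a) (i) :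
    ((piCx C).d k *ᵥ w) a i = ((C i).d k *ᵥ (fun j => w j i)) a := by
  simp [piCx, Matrix.mulVec, dotProduct, Finset.sum_apply]

lemma good_pi {ι : Type} {Rs : ι → Type} [∀ i, CommRing (Rs i)]
    (C : ∀ i, MatrixComplex (Rs i) (hochsterFormat f₀ r₁ r₂)) (h : ∀ i, Good (C i)) :
    Good (piCx C) := by
  constructor
  · intro w hw
    funext j i
    have : (C i).d 1 *ᵥ (fun j => w j i) = 0 := by
      funext a
      have := congrFun (congrFun hw a) i
      rw [piCx_mulVec] at this
      simpa using this
    have := (h i).1 _ this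
    exact congrFun this j
  · intro v hv
    have h1 : ∀ i, ∃ w, (C i).d 1 *ᵥ w = (fun j => v j i) := by
      intro i
      apply (h i).2
      funext a
      have := congrFun (congrFun hv a) i
      rw [piCx_mulVec] at this
      simpa using this
    choose w hw using h1
    refine ⟨fun j i => w i j, ?_⟩
    funext a
    funext i
    rw [piCx_mulVec]
    exact congrFun (hw i) a

lemma good_restrict (C : MatrixComplex R (hochsterFormat f₀ r₁ r₂)) (hC : Good C)
    (A : Subalgebra ℂ R) (hent : ∀ k i j, C.d k i j ∈ A)
    (hw : ∀ (v : Fin (hochsterFormat f₀ r₁ r₂ 1) → R)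
        (w : Fin (hochsterFormat f₀ r₁ r₂ 2) → R),
      (∀ i, v i ∈ A) → C.d 0 *ᵥ v = 0 → C.d 1 *ᵥ w = v → ∀ j, w j ∈ A) :
    Good (restrictCx C A hent) := by
  have hval : ∀ (k : ℕ) (u : Fin (hochsterFormat f₀ r₁ r₂ (k+1)) → ↥A),
      ((A.val : ↥A →+* R) ∘ ((restrictCx C A hent).d k *ᵥ u)) = C.d k *ᵥ ((A.val : ↥A →+* R) ∘ u) := by
    intro k u
    rw [← map_mulVec' (A.val : ↥A →+* R), restrictCx_map_val]
  constructor
  · intro w hw0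
    have : C.d 1 *ᵥ ((A.val : ↥A →+* R) ∘ w) = 0 := by
      rw [← hval 1 w, hw0]
      funext i; simp
    have := hC.1 _ this
    funext j
    exact Subtype.val_injective (congrFun this j)
  · intro v hv0
    have hv : C.d 0 *ᵥ ((A.val : ↥A →+* R) ∘ v) = 0 := by
      rw [← hval 0 v, hv0]
      funext i; simp
    obtain ⟨w, hw1⟩ := hC.2 _ hv
    have hmem : ∀ j, w j ∈ A := hw _ w (fun i => (v i).2) hv hw1
    refine ⟨fun j => ⟨w j, hmem j⟩, ?_⟩
    funext i
    apply Subtype.val_injective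
    have := congrFun (hval 1 (fun j => ⟨w j, hmem j⟩)) i
    simp only [Function.comp] at this ⊢
    rw [show ((A.val : ↥A →+* R) ∘ fun j => (⟨w j, hmem j⟩ : ↥A)) = w from rfl] at this
    rw [show (((restrictCx C A hent).d 1 *ᵥ fun j => (⟨w j, hmem j⟩ : ↥A)) i : R)
        = (A.val : ↥A →+* R) (((restrictCx C A hent).d 1 *ᵥ fun j => (⟨w j, hmem j⟩ : ↥A)) i) from rfl]
    rw [show (A.val : ↥A →+* R) (((restrictCx C A hent).d 1 *ᵥ fun j => (⟨w j, hmem j⟩ : ↥A)) i)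
        = ((A.val : ↥A →+* R) ∘ ((restrictCx C A hent).d 1 *ᵥ fun j => (⟨w j, hmem j⟩ : ↥A))) i from rfl]
    rw [hval 1]
    exact congrFun hw1 i

lemma good_mapEquiv (C : MatrixComplex R (hochsterFormat f₀ r₁ r₂)) (e : R ≃+* S)
    (h : Good C) : Good (mapCx C (e : R →+* S)) := by
  have key : ∀ (k : ℕ) (u : Fin (hochsterFormat f₀ r₁ r₂ (k+1)) → R),
      (mapCx C (e : R →+* S)).d k *ᵥ (⇑e ∘ u) = ⇑e ∘ (C.d k *ᵥ u) :=
    fun k u => map_mulVec' (e : R →+* S) _ u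
  constructor
  · intro w hw
    have hw' : ⇑e ∘ (⇑e.symm ∘ w) = w := by
      funext j; simp
    have : ⇑e ∘ (C.d 1 *ᵥ (⇑e.symm ∘ w)) = 0 := by
      rw [← key 1, hw', hw]
    have hz : C.d 1 *ᵥ (⇑e.symm ∘ w) = 0 := by
      funext i
      have := congrFun this i
      simp only [Function.comp, Pi.zero_apply] at this ⊢
      exact e.injective (by simpa using this)
    have := h.1 _ hz
    funext j
    have := congrFun this j
    simp only [Function.comp] at this
    calc w j = e (e.symm (w j)) := by simp
    _ = e 0 := by rw [show e.symm (w j) = 0 from this]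
    _ = 0 := map_zero e
  · intro v hv
    have hv' : C.d 0 *ᵥ (⇑e.symm ∘ v) = 0 := by
      funext i
      apply e.injective
      have h1 := congrFun (key 0 (⇑e.symm ∘ v)) i
      have h2 : ⇑e ∘ (⇑e.symm ∘ v) = v := by funext j; simp
      rw [h2] at h1
      have := congrFun hv i
      simp only [Function.comp, Pi.zero_apply] at h1 this ⊢
      rw [← h1, this, map_zero]
    obtain ⟨w, hw⟩ := h.2 _ hv'
    refine ⟨⇑e ∘ w, ?_⟩
    rw [key 1, hw]
    funext i; simp

end Constructions

section Chain

open Cardinal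

variable {f₀ r₁ r₂ : ℕ} {S : Type} [CommRing S] [Algebra ℂ S]

/-- The set of entries of the two nontrivial differentials. -/
def entSet (G : MatrixComplex S (hochsterFormat f₀ r₁ r₂)) : Set S :=
  (Set.range fun p : Fin (hochsterFormat f₀ r₁ r₂ 0) × Fin (hochsterFormat f₀ r₁ r₂ 1) =>
    G.d 0 p.1 p.2) ∪
  (Set.range fun p : Fin (hochsterFormat f₀ r₁ r₂ 1) × Fin (hochsterFormat f₀ r₁ r₂ 2) =>
    G.d 1 p.1 p.2)

/-- Solutions `w` of `d1 * w = v` with `v` constrained to a subalgebra. -/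
def wSet (G : MatrixComplex S (hochsterFormat f₀ r₁ r₂)) (A : Subalgebra ℂ S) : Set S :=
  {x | ∃ v : Fin (hochsterFormat f₀ r₁ r₂ 1) → S, (∀ i, v i ∈ A) ∧ G.d 0 *ᵥ v = 0 ∧
    ∃ w : Fin (hochsterFormat f₀ r₁ r₂ 2) → S, G.d 1 *ᵥ w = v ∧ ∃ j, w j = x}

def chain (G : MatrixComplex S (hochsterFormat f₀ r₁ r₂)) : ℕ → Subalgebra ℂ S
  | 0 => Algebra.adjoin ℂ (entSet G)
  | n+1 => Algebra.adjoin ℂ (↑(chain G n) ∪ wSet G (chain G n))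

lemma chain_mono (G : MatrixComplex S (hochsterFormat f₀ r₁ r₂)) : Monotone (chain G) :=
  monotone_nat_of_le_succ fun n x hx => Algebra.subset_adjoin (Or.inl hx)

def closureAlg (G : MatrixComplex S (hochsterFormat f₀ r₁ r₂)) : Subalgebra ℂ S :=
  ⨆ n, chain G n

lemma mem_closure_iff (G : MatrixComplex S (hochsterFormat f₀ r₁ r₂)) (x : S) :
    x ∈ closureAlg G ↔ ∃ n, x ∈ chain G n := by
  have hdir : Directed (· ≤ ·) (chain G) := (chain_mono G).directed_le
  constructor
  · intro hx
    have : x ∈ (↑(⨆ n, chain G n) : Set S) := hx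
    rw [Subalgebra.coe_iSup_of_directed hdir] at this
    simpa using this
  · rintro ⟨n, hn⟩
    exact le_iSup (chain G) n hn

lemma entries_mem_closure (G : MatrixComplex S (hochsterFormat f₀ r₁ r₂)) :
    ∀ k i j, G.d k i j ∈ closureAlg G := by
  intro k i j
  match k with
  | 0 =>
    apply (mem_closure_iff G _).2 ⟨0, ?_⟩
    exact Algebra.subset_adjoin (Or.inl ⟨(i, j), rfl⟩)
  | 1 =>
    apply (mem_closure_iff G _).2 ⟨0, ?_⟩
    exact Algebra.subset_adjoin (Or.inr ⟨(i, j), rfl⟩)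
  | (k+2) =>
    have he : IsEmpty (Fin (hochsterFormat f₀ r₁ r₂ (k + 2 + 1))) := by
      rw [fmt_ge3 f₀ r₁ r₂ (show 3 ≤ k + 2 + 1 by omega)]
      infer_instance
    exact he.elim j

lemma closure_closed (G : MatrixComplex S (hochsterFormat f₀ r₁ r₂))
    (v : Fin (hochsterFormat f₀ r₁ r₂ 1) → S) (w : Fin (hochsterFormat f₀ r₁ r₂ 2) → S)
    (hv : ∀ i, v i ∈ closureAlg G) (hv0 : G.d 0 *ᵥ v = 0) (hw : G.d 1 *ᵥ w = v) :
    ∀ j, w j ∈ closureAlg G := by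
  intro j
  have hns : ∀ i, ∃ n, v i ∈ chain G n := fun i => (mem_closure_iff G _).1 (hv i)
  choose ns hns using hns
  set N := Finset.univ.sup ns with hN
  have hvN : ∀ i, v i ∈ chain G N :=
    fun i => chain_mono G (Finset.le_sup (Finset.mem_univ i)) (hns i)
  have : w j ∈ wSet G (chain G N) := ⟨v, hvN, hv0, w, hw, j, rfl⟩
  exact (mem_closure_iff G _).2 ⟨N + 1, Algebra.subset_adjoin (Or.inr this)⟩

lemma good_closure (G : MatrixComplex S (hochsterFormat f₀ r₁ r₂)) (hG : Good G) :
    Good (restrictCx G (closureAlg G) (entries_mem_closure G)) :=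
  good_restrict G hG _ _ (fun v w hv hv0 hw => closure_closed G v w hv hv0 hw)

lemma card_adjoin_le (s : Set S) (hs : #s ≤ #ℂ) : #(Algebra.adjoin ℂ s) ≤ #ℂ := by
  have h1 : #(Algebra.adjoin ℂ s) ≤ #(MvPolynomial s ℂ) := by
    rw [Algebra.adjoin_eq_range]
    exact Cardinal.mk_le_of_surjective
      (f := fun p => (⟨MvPolynomial.aeval ((↑) : s → S) p, ⟨p, rfl⟩⟩ :
        ↥(MvPolynomial.aeval ((↑) : s → S)).range))
      (by rintro ⟨x, p, rfl⟩; exact ⟨p, rfl⟩)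
  refine h1.trans (MvPolynomial.cardinalMk_le_max.trans ?_)
  have : ℵ₀ ≤ #ℂ := Cardinal.aleph0_le_mk ℂ
  exact max_le (max_le le_rfl hs) this

lemma card_fun_le {n : ℕ} {X : Type} (hX : #X ≤ #ℂ) : #(Fin n → X) ≤ #ℂ := by
  have h1 : #(Fin n → X) = #X ^ (n : Cardinal) := by
    rw [← Cardinal.power_def, Cardinal.mk_fin]
  rw [h1, Cardinal.power_natCast]
  calc #X ^ n ≤ #ℂ ^ n := by
        apply pow_le_pow_left₀ zero_le hX
    _ ≤ #ℂ := Cardinal.power_nat_le (Cardinal.aleph0_le_mk ℂ)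

lemma card_chain_le (G : MatrixComplex S (hochsterFormat f₀ r₁ r₂)) (hG : Good G) (n : ℕ) :
    #(chain G n) ≤ #ℂ := by
  induction n with
  | zero =>
    apply card_adjoin_le
    refine le_trans (Cardinal.mk_union_le _ _) ?_
    have hfin : ∀ {m : ℕ} (g : Fin m → S), #(Set.range g) ≤ #ℂ := by
      intro m g
      exact le_trans Cardinal.mk_range_le
        (le_trans (le_of_lt (Cardinal.lt_aleph0_of_finite _)) (Cardinal.aleph0_le_mk ℂ))
    have h1 : #(Set.range fun p : Fin (hochsterFormat f₀ r₁ r₂ 0) ×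
        Fin (hochsterFormat f₀ r₁ r₂ 1) => G.d 0 p.1 p.2) ≤ #ℂ :=
      le_trans Cardinal.mk_range_le
        (le_trans (le_of_lt (Cardinal.lt_aleph0_of_finite _)) (Cardinal.aleph0_le_mk ℂ))
    have h2 : #(Set.range fun p : Fin (hochsterFormat f₀ r₁ r₂ 1) ×
        Fin (hochsterFormat f₀ r₁ r₂ 2) => G.d 1 p.1 p.2) ≤ #ℂ :=
      le_trans Cardinal.mk_range_le
        (le_trans (le_of_lt (Cardinal.lt_aleph0_of_finite _)) (Cardinal.aleph0_le_mk ℂ))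
    calc _ ≤ #ℂ + #ℂ := add_le_add h1 h2
    _ = #ℂ := Cardinal.add_eq_self (Cardinal.aleph0_le_mk ℂ)
  | succ n ih =>
    apply card_adjoin_le
    refine le_trans (Cardinal.mk_union_le _ _) ?_
    have hw : #(wSet G (chain G n)) ≤ #ℂ := by
      classical
      set F : ((Fin (hochsterFormat f₀ r₁ r₂ 1) → ↥(chain G n)) ×
          Fin (hochsterFormat f₀ r₁ r₂ 2)) → S :=
        fun p => if h : ∃ w : Fin (hochsterFormat f₀ r₁ r₂ 2) → S,
            G.d 1 *ᵥ w = (fun i => ((p.1 i : S))) then (Classical.choose h) p.2 else 0 with hF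
      have hsub : wSet G (chain G n) ⊆ Set.range F := by
        rintro x ⟨v, hv, hv0, w, hw1, j, rfl⟩
        refine ⟨(fun i => ⟨v i, hv i⟩, j), ?_⟩
        rw [hF]
        simp only
        have hex : ∃ w' : Fin (hochsterFormat f₀ r₁ r₂ 2) → S,
            G.d 1 *ᵥ w' = (fun i => v i) := ⟨w, hw1⟩
        rw [dif_pos hex]
        have := Classical.choose_spec hex
        have huniq : Classical.choose hex = w := by
          have hdiff : G.d 1 *ᵥ (Classical.choose hex - w) = 0 := by
            rw [Matrix.mulVec_sub, this, hw1]
            simp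
          have := hG.1 _ hdiff
          funext a
          have := congrFun this a
          simpa [sub_eq_zero] using this
        rw [huniq]
      refine le_trans (Cardinal.mk_le_mk_of_subset hsub) (le_trans Cardinal.mk_range_le ?_)
      rw [Cardinal.mk_prod]
      simp only [Cardinal.lift_id]
      have hA : #(Fin (hochsterFormat f₀ r₁ r₂ 1) → ↥(chain G n)) ≤ #ℂ := card_fun_le ih
      have hB : #(Fin (hochsterFormat f₀ r₁ r₂ 2)) ≤ #ℂ :=
        le_trans (le_of_lt (Cardinal.lt_aleph0_of_finite _)) (Cardinal.aleph0_le_mk ℂ)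
      calc _ ≤ #ℂ * #ℂ := mul_le_mul' hA hB
      _ = #ℂ := Cardinal.mul_eq_self (Cardinal.aleph0_le_mk ℂ)
    calc _ ≤ #ℂ + #ℂ := add_le_add ih hw
    _ = #ℂ := Cardinal.add_eq_self (Cardinal.aleph0_le_mk ℂ)

lemma card_closure_le (G : MatrixComplex S (hochsterFormat f₀ r₁ r₂)) (hG : Good G) :
    #(closureAlg G) ≤ #ℂ := by
  have hdir : Directed (· ≤ ·) (chain G) := (chain_mono G).directed_le
  have h1 : (↑(closureAlg G) : Set S) = ⋃ n, (chain G n : Set S) :=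
    Subalgebra.coe_iSup_of_directed hdir
  have h2 : #(closureAlg G) = #(⋃ n, (chain G n : Set S)) := by rw [← h1]; rfl
  rw [h2]
  refine le_trans (Cardinal.mk_iUnion_le _) ?_
  have : ⨆ n, #(chain G n : Set S) ≤ #ℂ := ciSup_le' fun n => card_chain_le G hG n
  calc _ ≤ ℵ₀ * #ℂ := by
        apply mul_le_mul'
        · simp
        · exact this
  _ ≤ #ℂ * #ℂ := mul_le_mul' (Cardinal.aleph0_le_mk ℂ) le_rfl
  _ = #ℂ := Cardinal.mul_eq_self (Cardinal.aleph0_le_mk ℂ)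

end Chain

section Universal

open Cardinal

variable (f₀ r₁ r₂ : ℕ)

/-- Index type for the solution set: ideals of a fixed big polynomial ring together with a
good complex on the quotient. -/
def Idx : Type :=
  Σ J : Ideal (MvPolynomial ℂ ℂ),
    {C : MatrixComplex (MvPolynomial ℂ ℂ ⧸ J) (hochsterFormat f₀ r₁ r₂) // Good C}

/-- The weakly initial object: the product over the solution set. -/
abbrev BigW : Type := ∀ i : Idx f₀ r₁ r₂, MvPolynomial ℂ ℂ ⧸ i.1

/-- The weakly initial complex. -/
noncomputable def GW : MatrixComplex (BigW f₀ r₁ r₂) (hochsterFormat f₀ r₁ r₂) :=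
  piCx (fun i : Idx f₀ r₁ r₂ => i.2.1)

lemma good_GW : Good (GW f₀ r₁ r₂) := good_pi _ fun i => i.2.2

lemma weak_initial (S : Type) [CommRing S] [Algebra ℂ S]
    (G : MatrixComplex S (hochsterFormat f₀ r₁ r₂)) (hG : Good G) :
    ∃ χ : BigW f₀ r₁ r₂ →ₐ[ℂ] S, SpecializesCx (χ : BigW f₀ r₁ r₂ →+* S) (GW f₀ r₁ r₂) G := by
  classical
  set A := closureAlg G with hA
  set G₀ := restrictCx G A (entries_mem_closure G) with hG₀def
  have hG₀ : Good G₀ := good_closure G hG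
  have hcard : #A ≤ #ℂ := card_closure_le G hG
  obtain ⟨emb⟩ := Cardinal.le_def (↥A) ℂ |>.1 hcard
  haveI : Nonempty ↥A := ⟨1⟩
  set g : ℂ → ↥A := Function.invFun emb with hg
  have hgsurj : Function.Surjective g := Function.invFun_surjective emb.injective
  set θ : MvPolynomial ℂ ℂ →ₐ[ℂ] ↥A := MvPolynomial.aeval g with hθdef
  have hθ : Function.Surjective θ := by
    intro x
    obtain ⟨c, rfl⟩ := hgsurj x
    exact ⟨MvPolynomial.X c, MvPolynomial.aeval_X g c⟩
  set e : (MvPolynomial ℂ ℂ ⧸ RingHom.ker θ) ≃ₐ[ℂ] ↥A :=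
    Ideal.quotientKerAlgEquivOfSurjective hθ with he
  set G₂ := mapCx G₀ (e.symm.toRingEquiv : ↥A →+* (MvPolynomial ℂ ℂ ⧸ RingHom.ker θ)) with hG₂def
  have hG₂ : Good G₂ := good_mapEquiv G₀ e.symm.toRingEquiv hG₀
  set i : Idx f₀ r₁ r₂ := ⟨RingHom.ker θ, ⟨G₂, hG₂⟩⟩ with hi
  set χ : BigW f₀ r₁ r₂ →ₐ[ℂ] S :=
    (A.val).comp ((e.toAlgHom).comp (Pi.evalAlgHom ℂ _ i)) with hχ
  refine ⟨χ, ?_⟩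
  intro k
  ext a b
  show χ ((GW f₀ r₁ r₂).d k a b) = G.d k a b
  calc χ ((GW f₀ r₁ r₂).d k a b)
      = A.val (e (G₂.d k a b)) := rfl
    _ = A.val (e (e.symm (G₀.d k a b))) := rfl
    _ = A.val (G₀.d k a b) := by rw [AlgEquiv.apply_symm_apply]
    _ = G.d k a b := rfl

/-- The universal algebra: the joint equalizer of all specializing endomorphisms of `BigW`. -/
noncomputable def fixedAlg : Subalgebra ℂ (BigW f₀ r₁ r₂) :=
  ⨅ ψ : {ψ : BigW f₀ r₁ r₂ →ₐ[ℂ] BigW f₀ r₁ r₂ //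
      SpecializesCx (ψ : BigW f₀ r₁ r₂ →+* BigW f₀ r₁ r₂) (GW f₀ r₁ r₂) (GW f₀ r₁ r₂)},
    AlgHom.equalizer ψ.1 (AlgHom.id ℂ (BigW f₀ r₁ r₂))

lemma mem_fixedAlg {x : BigW f₀ r₁ r₂} :
    x ∈ fixedAlg f₀ r₁ r₂ ↔ ∀ ψ : BigW f₀ r₁ r₂ →ₐ[ℂ] BigW f₀ r₁ r₂,
      SpecializesCx (ψ : BigW f₀ r₁ r₂ →+* BigW f₀ r₁ r₂) (GW f₀ r₁ r₂) (GW f₀ r₁ r₂) →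
        ψ x = x := by
  rw [fixedAlg, Algebra.mem_iInf]
  constructor
  · intro h ψ hψ
    exact (AlgHom.mem_equalizer _ _ _).1 (h ⟨ψ, hψ⟩)
  · intro h ψ
    exact (AlgHom.mem_equalizer _ _ _).2 (h ψ.1 ψ.2)

lemma entries_mem_fixedAlg : ∀ k a b, (GW f₀ r₁ r₂).d k a b ∈ fixedAlg f₀ r₁ r₂ := by
  intro k a b
  rw [mem_fixedAlg]
  intro ψ hψ
  exact congrFun (congrFun (hψ k) a) b

/-- The universal complex. -/
noncomputable def univCx : MatrixComplex (↥(fixedAlg f₀ r₁ r₂)) (hochsterFormat f₀ r₁ r₂) :=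
  restrictCx (GW f₀ r₁ r₂) (fixedAlg f₀ r₁ r₂) (entries_mem_fixedAlg f₀ r₁ r₂)

lemma good_univCx : Good (univCx f₀ r₁ r₂) := by
  apply good_restrict _ (good_GW f₀ r₁ r₂)
  intro v w hv hv0 hw j
  rw [mem_fixedAlg]
  intro ψ hψ
  have h1 := map_mulVec' (ψ : BigW f₀ r₁ r₂ →+* BigW f₀ r₁ r₂) ((GW f₀ r₁ r₂).d 1) w
  rw [hψ 1, hw] at h1
  have h2 : (⇑(ψ : BigW f₀ r₁ r₂ →+* BigW f₀ r₁ r₂) ∘ v) = v := by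
    funext i
    exact (mem_fixedAlg f₀ r₁ r₂).1 (hv i) ψ hψ
  rw [h2, ← hw] at h1
  have h3 : (GW f₀ r₁ r₂).d 1 *ᵥ ((⇑(ψ : BigW f₀ r₁ r₂ →+* BigW f₀ r₁ r₂) ∘ w) - w) = 0 := by
    rw [Matrix.mulVec_sub, h1, sub_self]
  have h4 := (good_GW f₀ r₁ r₂).1 _ h3
  have h5 := congrFun h4 j
  have h6 : (ψ : BigW f₀ r₁ r₂ →+* BigW f₀ r₁ r₂) (w j) = w j := by
    simpa [sub_eq_zero] using h5
  exact h6

end Universal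

end HochAux

open HochAux Matrix in
theorem hochster_universal_pair_exists
    (r₁ r₂ f₀ : ℕ) (h₁ : 1 ≤ r₁) (h₂ : 1 ≤ r₂) (h₀ : r₁ ≤ f₀) :
    ∃ U : AlgebraComplexPair (hochsterFormat f₀ r₁ r₂),
      U.complex.IsAcyclic 2 ∧
      ∀ (S : Type) (_ : CommRing S) (_ : Algebra ℂ S)
        (G : MatrixComplex S (hochsterFormat f₀ r₁ r₂)),
        G.IsAcyclic 2 →
        ∃! φ : U.carrier →ₐ[ℂ] S, SpecializesCx (φ : U.carrier →+* S) U.complex G := by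
  classical
  letI i1 : CommRing ↥(fixedAlg f₀ r₁ r₂) := inferInstance
  letI i2 : Algebra ℂ ↥(fixedAlg f₀ r₁ r₂) := inferInstance
  refine ⟨{ carrier := ↥(fixedAlg f₀ r₁ r₂), complex := univCx f₀ r₁ r₂ }, ?_, ?_⟩
  · exact (good_iff_acyclic _).1 (good_univCx f₀ r₁ r₂)
  · intro S cS aS G hGa
    have hG : Good G := (good_iff_acyclic G).2 hGa
    obtain ⟨χ₀, hχ₀⟩ := weak_initial f₀ r₁ r₂ S G hG
    have hφ : SpecializesCx ((χ₀.comp (fixedAlg f₀ r₁ r₂).val :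
        ↥(fixedAlg f₀ r₁ r₂) →ₐ[ℂ] S) : ↥(fixedAlg f₀ r₁ r₂) →+* S) (univCx f₀ r₁ r₂) G := by
      intro k
      have h2 : ((univCx f₀ r₁ r₂).d k).map
          (((fixedAlg f₀ r₁ r₂).val : ↥(fixedAlg f₀ r₁ r₂) →+* BigW f₀ r₁ r₂)) =
          (GW f₀ r₁ r₂).d k := restrictCx_map_val _ _ _ k
      have h1 : ((univCx f₀ r₁ r₂).d k).map
          (⇑((χ₀.comp (fixedAlg f₀ r₁ r₂).val : ↥(fixedAlg f₀ r₁ r₂) →ₐ[ℂ] S) :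
            ↥(fixedAlg f₀ r₁ r₂) →+* S)) =
          (((univCx f₀ r₁ r₂).d k).map
            (((fixedAlg f₀ r₁ r₂).val : ↥(fixedAlg f₀ r₁ r₂) →+* BigW f₀ r₁ r₂))).map
            (⇑(χ₀ : BigW f₀ r₁ r₂ →+* S)) := by
        rw [Matrix.map_map]
        rfl
      rw [h1, h2, hχ₀ k]
    refine ⟨χ₀.comp (fixedAlg f₀ r₁ r₂).val, hφ, ?_⟩
    intro ψ' hψ₀
    have hψ' : SpecializesCx (ψ' : ↥(fixedAlg f₀ r₁ r₂) →+* S) (univCx f₀ r₁ r₂) G := hψ₀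
    letI i3 : CommRing ↥(AlgHom.equalizer (ψ' : ↥(fixedAlg f₀ r₁ r₂) →ₐ[ℂ] S) (χ₀.comp (fixedAlg f₀ r₁ r₂).val)) := inferInstance
    letI i4 : Algebra ℂ ↥(AlgHom.equalizer (ψ' : ↥(fixedAlg f₀ r₁ r₂) →ₐ[ℂ] S) (χ₀.comp (fixedAlg f₀ r₁ r₂).val)) := inferInstance
    have hgoal : ψ' = χ₀.comp (fixedAlg f₀ r₁ r₂).val := by
      have hent' : ∀ k a b, (univCx f₀ r₁ r₂).d k a b ∈
          AlgHom.equalizer (ψ' : ↥(fixedAlg f₀ r₁ r₂) →ₐ[ℂ] S) (χ₀.comp (fixedAlg f₀ r₁ r₂).val) := by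
        intro k a b
        rw [AlgHom.mem_equalizer]
        have e1 := congrFun (congrFun (hψ' k) a) b
        have e2 := congrFun (congrFun (hφ k) a) b
        exact e1.trans e2.symm
      have good_CEq : Good (restrictCx (univCx f₀ r₁ r₂)
          (AlgHom.equalizer (ψ' : ↥(fixedAlg f₀ r₁ r₂) →ₐ[ℂ] S) (χ₀.comp (fixedAlg f₀ r₁ r₂).val)) hent') := by
        apply good_restrict _ (good_univCx f₀ r₁ r₂)
        intro v w hv hv0 hw j
        rw [AlgHom.mem_equalizer]
        have k1 := map_mulVec' (ψ' : ↥(fixedAlg f₀ r₁ r₂) →+* S) ((univCx f₀ r₁ r₂).d 1) w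
        rw [hψ' 1, hw] at k1
        have k2 := map_mulVec' ((χ₀.comp (fixedAlg f₀ r₁ r₂).val :
          ↥(fixedAlg f₀ r₁ r₂) →ₐ[ℂ] S) : ↥(fixedAlg f₀ r₁ r₂) →+* S) ((univCx f₀ r₁ r₂).d 1) w
        rw [hφ 1, hw] at k2
        have k3 : ⇑(ψ' : ↥(fixedAlg f₀ r₁ r₂) →+* S) ∘ v =
            ⇑((χ₀.comp (fixedAlg f₀ r₁ r₂).val : ↥(fixedAlg f₀ r₁ r₂) →ₐ[ℂ] S) :
              ↥(fixedAlg f₀ r₁ r₂) →+* S) ∘ v := by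
          funext i
          exact (AlgHom.mem_equalizer (ψ' : ↥(fixedAlg f₀ r₁ r₂) →ₐ[ℂ] S)
            (χ₀.comp (fixedAlg f₀ r₁ r₂).val) (v i)).1 (hv i)
        have k4 : G.d 1 *ᵥ ((⇑(ψ' : ↥(fixedAlg f₀ r₁ r₂) →+* S) ∘ w) -
            (⇑((χ₀.comp (fixedAlg f₀ r₁ r₂).val : ↥(fixedAlg f₀ r₁ r₂) →ₐ[ℂ] S) :
              ↥(fixedAlg f₀ r₁ r₂) →+* S) ∘ w)) = 0 := by
          rw [Matrix.mulVec_sub, k1, k2, k3, sub_self]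
        have k5 := congrFun (hG.1 _ k4) j
        have k6 : (ψ' : ↥(fixedAlg f₀ r₁ r₂) →+* S) (w j) =
            ((χ₀.comp (fixedAlg f₀ r₁ r₂).val : ↥(fixedAlg f₀ r₁ r₂) →ₐ[ℂ] S) :
              ↥(fixedAlg f₀ r₁ r₂) →+* S) (w j) := by
          simpa [sub_eq_zero] using k5
        exact k6
      obtain ⟨χ₁, hχ₁⟩ := weak_initial f₀ r₁ r₂
        (↥(AlgHom.equalizer (ψ' : ↥(fixedAlg f₀ r₁ r₂) →ₐ[ℂ] S) (χ₀.comp (fixedAlg f₀ r₁ r₂).val)))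
        (restrictCx (univCx f₀ r₁ r₂)
          (AlgHom.equalizer (ψ' : ↥(fixedAlg f₀ r₁ r₂) →ₐ[ℂ] S) (χ₀.comp (fixedAlg f₀ r₁ r₂).val)) hent') good_CEq
      have hΨspec : SpecializesCx
          (((fixedAlg f₀ r₁ r₂).val.comp
            ((AlgHom.equalizer (ψ' : ↥(fixedAlg f₀ r₁ r₂) →ₐ[ℂ] S) (χ₀.comp (fixedAlg f₀ r₁ r₂).val)).val.comp χ₁) :
            BigW f₀ r₁ r₂ →ₐ[ℂ] BigW f₀ r₁ r₂) : BigW f₀ r₁ r₂ →+* BigW f₀ r₁ r₂)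
          (GW f₀ r₁ r₂) (GW f₀ r₁ r₂) := by
        intro k
        have h1 : ((GW f₀ r₁ r₂).d k).map
            (⇑(((fixedAlg f₀ r₁ r₂).val.comp
              ((AlgHom.equalizer (ψ' : ↥(fixedAlg f₀ r₁ r₂) →ₐ[ℂ] S) (χ₀.comp (fixedAlg f₀ r₁ r₂).val)).val.comp χ₁) :
              BigW f₀ r₁ r₂ →ₐ[ℂ] BigW f₀ r₁ r₂) : BigW f₀ r₁ r₂ →+* BigW f₀ r₁ r₂)) =
            ((((GW f₀ r₁ r₂).d k).map (⇑(χ₁ :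
              BigW f₀ r₁ r₂ →+* ↥(AlgHom.equalizer (ψ' : ↥(fixedAlg f₀ r₁ r₂) →ₐ[ℂ] S) (χ₀.comp (fixedAlg f₀ r₁ r₂).val))))).map
              (((AlgHom.equalizer (ψ' : ↥(fixedAlg f₀ r₁ r₂) →ₐ[ℂ] S) (χ₀.comp (fixedAlg f₀ r₁ r₂).val)).val :
                ↥(AlgHom.equalizer (ψ' : ↥(fixedAlg f₀ r₁ r₂) →ₐ[ℂ] S) (χ₀.comp (fixedAlg f₀ r₁ r₂).val)) →+*
                  ↥(fixedAlg f₀ r₁ r₂)))).map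
              (((fixedAlg f₀ r₁ r₂).val : ↥(fixedAlg f₀ r₁ r₂) →+* BigW f₀ r₁ r₂)) := by
          rw [Matrix.map_map, Matrix.map_map]
          rfl
        rw [h1, hχ₁ k]
        have h2 : ((restrictCx (univCx f₀ r₁ r₂)
            (AlgHom.equalizer (ψ' : ↥(fixedAlg f₀ r₁ r₂) →ₐ[ℂ] S) (χ₀.comp (fixedAlg f₀ r₁ r₂).val)) hent').d k).map
            (((AlgHom.equalizer (ψ' : ↥(fixedAlg f₀ r₁ r₂) →ₐ[ℂ] S) (χ₀.comp (fixedAlg f₀ r₁ r₂).val)).val :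
              ↥(AlgHom.equalizer (ψ' : ↥(fixedAlg f₀ r₁ r₂) →ₐ[ℂ] S) (χ₀.comp (fixedAlg f₀ r₁ r₂).val)) →+*
                ↥(fixedAlg f₀ r₁ r₂))) = (univCx f₀ r₁ r₂).d k := restrictCx_map_val _ _ _ k
        rw [h2]
        exact restrictCx_map_val _ _ _ k
      apply AlgHom.ext
      intro x
      have h1 : ((fixedAlg f₀ r₁ r₂).val.comp
          ((AlgHom.equalizer (ψ' : ↥(fixedAlg f₀ r₁ r₂) →ₐ[ℂ] S) (χ₀.comp (fixedAlg f₀ r₁ r₂).val)).val.comp χ₁))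
          (x : BigW f₀ r₁ r₂) = (x : BigW f₀ r₁ r₂) :=
        (mem_fixedAlg f₀ r₁ r₂).1 x.2 _ hΨspec
      have h2 : ((χ₁ (x : BigW f₀ r₁ r₂) :
          ↥(AlgHom.equalizer (ψ' : ↥(fixedAlg f₀ r₁ r₂) →ₐ[ℂ] S) (χ₀.comp (fixedAlg f₀ r₁ r₂).val))) :
          ↥(fixedAlg f₀ r₁ r₂)) = x := Subtype.ext h1
      have h3 : x ∈ AlgHom.equalizer (ψ' : ↥(fixedAlg f₀ r₁ r₂) →ₐ[ℂ] S) (χ₀.comp (fixedAlg f₀ r₁ r₂).val) := by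
        rw [← h2]
        exact (χ₁ (x : BigW f₀ r₁ r₂)).2
      exact (AlgHom.mem_equalizer _ _ _).1 h3
    exact hgoal
end

section
/- (Bruns.) Let n ≥ 1 and let r_0, r_1, …, r_n be nonnegative integers, and consider the format (f_0, …, f_n) = (r_0 + r_1, r_1 + r_2, …, r_{n−1} + r_n, r_n). Then there exists a generic pair for this format over ℂ: a commutative ℂ-algebra R_gen together with an acyclic complex F^gen of finite free R_gen-modules of this format such that for every commutative ℂ-algebra S and every acyclic complex G of finite free S-modules of the same format, there exists a (not necessarily unique) ℂ-algebra homomorphism R_gen → S specializing F^gen to G. -/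
/-- The format `(r₀ + r₁, r₁ + r₂, …, r_{n-1} + r_n, r_n)` of length `n` determined by the
ranks `r 0, …, r n` of the differentials. -/
def brunsFormat (n : ℕ) (r : ℕ → ℕ) : ℕ → ℕ :=
  fun k => if k < n then r k + r (k + 1) else if k = n then r n else 0

noncomputable section
namespace Bruns

variable {f : ℕ → ℕ}

/-- Push a matrix complex forward along a ring homomorphism. -/
def MatrixComplex.mapHom {R S : Type} [CommRing R] [CommRing S] (φ : R →+* S)
    (C : MatrixComplex R f) : MatrixComplex S f where
  d k := (C.d k).map φ
  comp_eq_zero k := by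
    rw [← Matrix.map_mul, C.comp_eq_zero, Matrix.map_zero _ (map_zero φ)]

/-! ### Stage 0 : the generic complex -/

def BaseVars (f : ℕ → ℕ) : Type := Σ k : ℕ, Fin (f k) × Fin (f (k + 1))

def baseRel (f : ℕ → ℕ) : Set (MvPolynomial (BaseVars f) ℂ) :=
  { p | ∃ (k : ℕ) (i : Fin (f k)) (l : Fin (f (k + 2))),
      p = ∑ j : Fin (f (k + 1)),
        MvPolynomial.X ⟨k, (i, j)⟩ * MvPolynomial.X ⟨k + 1, (j, l)⟩ }

def baseIdeal (f : ℕ → ℕ) : Ideal (MvPolynomial (BaseVars f) ℂ) := Ideal.span (baseRel f)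

def base (f : ℕ → ℕ) : AlgebraComplexPair f where
  carrier := MvPolynomial (BaseVars f) ℂ ⧸ baseIdeal f
  complex :=
    { d := fun k => Matrix.of fun i j => Ideal.Quotient.mk _ (MvPolynomial.X ⟨k, (i, j)⟩)
      comp_eq_zero := fun k => by
        ext i l
        simp only [Matrix.mul_apply, Matrix.of_apply, Matrix.zero_apply]
        simp_rw [← map_mul, ← map_sum]
        exact Ideal.Quotient.eq_zero_iff_mem.2 (Ideal.subset_span ⟨k, i, l, rfl⟩) }


lemma base_d (k : ℕ) (i j) :
    (base f).complex.d k i j = Ideal.Quotient.mk _ (MvPolynomial.X ⟨k, (i, j)⟩) := rfl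

/-! ### The inductive step: adjoin witnesses turning cycles into boundaries -/

variable (n : ℕ)

/-- Cycles (in homological degrees `< n`) of the complex of a pair. -/
def CycleType (s : AlgebraComplexPair f) : Type :=
  Σ k : Fin n, { z : Fin (f ((k : ℕ) + 1)) → s.carrier // (s.complex.d k).mulVec z = 0 }

def StepVars (s : AlgebraComplexPair f) : Type :=
  Σ c : CycleType n s, Fin (f ((c.1 : ℕ) + 2))

def stepRel (s : AlgebraComplexPair f) :
    Set (MvPolynomial (StepVars n s) s.carrier) :=
  { p | ∃ (c : CycleType n s) (i : Fin (f ((c.1 : ℕ) + 1))),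
      p = MvPolynomial.C (c.2.val i) -
        ∑ j, MvPolynomial.C (s.complex.d ((c.1 : ℕ) + 1) i j) * MvPolynomial.X ⟨c, j⟩ }

def stepIdeal (s : AlgebraComplexPair f) : Ideal (MvPolynomial (StepVars n s) s.carrier) :=
  Ideal.span (stepRel n s)

def stepAlgHom (s : AlgebraComplexPair f) :
    s.carrier →ₐ[ℂ] (MvPolynomial (StepVars n s) s.carrier ⧸ stepIdeal n s) :=
  (Ideal.Quotient.mkₐ ℂ _).comp (IsScalarTower.toAlgHom ℂ s.carrier _)

lemma stepAlgHom_apply (s : AlgebraComplexPair f) (x : s.carrier) :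
    stepAlgHom n s x = Ideal.Quotient.mk (stepIdeal n s) (MvPolynomial.C x) := rfl

def step (s : AlgebraComplexPair f) : AlgebraComplexPair f where
  carrier := MvPolynomial (StepVars n s) s.carrier ⧸ stepIdeal n s
  complex := MatrixComplex.mapHom (stepAlgHom n s : s.carrier →+* _) s.complex

lemma step_d (s : AlgebraComplexPair f) (k : ℕ) :
    (step n s).complex.d k = (s.complex.d k).map (stepAlgHom n s) := rfl

set_option maxHeartbeats 2000000 in
/-- In the step ring, every cycle of the previous stage becomes a boundary. -/
lemma step_boundary (s : AlgebraComplexPair f) (c : CycleType n s) :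
    ∃ y : Fin (f ((c.1 : ℕ) + 2)) → (step n s).carrier,
      ((step n s).complex.d ((c.1 : ℕ) + 1)).mulVec y =
        fun i => stepAlgHom n s (c.2.val i) := by
  refine ⟨fun j => Ideal.Quotient.mk _ (MvPolynomial.X ⟨c, j⟩), ?_⟩
  funext i
  show (∑ j, ((s.complex.d ((c.1 : ℕ) + 1)).map (stepAlgHom n s)) i j *
      Ideal.Quotient.mk _ (MvPolynomial.X ⟨c, j⟩)) = _
  have : ∀ j, ((s.complex.d ((c.1 : ℕ) + 1)).map (stepAlgHom n s)) i j =
      Ideal.Quotient.mk (stepIdeal n s) (MvPolynomial.C (s.complex.d ((c.1 : ℕ) + 1) i j)) :=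
    fun j => rfl
  simp_rw [this, ← map_mul, ← map_sum, stepAlgHom_apply]
  have hgen : (MvPolynomial.C (c.2.val i) -
      ∑ j, MvPolynomial.C (s.complex.d ((c.1 : ℕ) + 1) i j) * MvPolynomial.X ⟨c, j⟩)
      ∈ stepRel n s := ⟨c, i, rfl⟩
  exact (Ideal.Quotient.eq.2 (Ideal.subset_span hgen)).symm


/-! ### Lifting specializations through the stages -/

lemma mulVec_map {R S : Type} [CommRing R] [CommRing S] (φ : R →+* S) {a b : ℕ}
    (M : Matrix (Fin a) (Fin b) R) (v : Fin b → R) :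
    (M.map φ).mulVec (fun j => φ (v j)) = fun i => φ (M.mulVec v i) := by
  funext i
  exact (RingHom.map_mulVec φ M v i).symm

variable {S : Type} [CommRing S] [Algebra ℂ S]

lemma base_lift (G : MatrixComplex S f) :
    ∃ φ : (base f).carrier →ₐ[ℂ] S,
      SpecializesCx (φ : (base f).carrier →+* S) (base f).complex G := by
  set Ψ : MvPolynomial (BaseVars f) ℂ →ₐ[ℂ] S :=
    MvPolynomial.aeval (fun v : BaseVars f => G.d v.1 v.2.1 v.2.2) with hΨ
  have hker : baseIdeal f ≤ RingHom.ker (Ψ : MvPolynomial (BaseVars f) ℂ →+* S) := by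
    rw [baseIdeal, Ideal.span_le]
    rintro p ⟨k, i, l, rfl⟩
    simp only [SetLike.mem_coe, RingHom.mem_ker]
    have h0 : (G.d k * G.d (k + 1)) i l = 0 := by rw [G.comp_eq_zero]; rfl
    rw [← h0, Matrix.mul_apply]
    simp [hΨ]
    exact Finset.sum_congr rfl fun x _ =>
      congrArg₂ (· * ·) (MvPolynomial.aeval_X _ _) (MvPolynomial.aeval_X _ _)
  refine ⟨Ideal.Quotient.liftₐ (baseIdeal f) Ψ (fun a ha => by simpa using hker ha), fun k => ?_⟩
  ext i j
  rw [Matrix.map_apply, base_d]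
  show Ideal.Quotient.liftₐ (baseIdeal f) Ψ (fun a ha => by simpa using hker ha)
      (Ideal.Quotient.mk (baseIdeal f) (MvPolynomial.X ⟨k, (i, j)⟩)) = G.d k i j
  rw [Ideal.Quotient.liftₐ_apply]
  refine (Ideal.Quotient.lift_mk _ _ _).trans ?_
  exact MvPolynomial.aeval_X _ _

lemma specializes_step {s : AlgebraComplexPair f} {G : MatrixComplex S f}
    {φ : s.carrier →ₐ[ℂ] S} (hφ : SpecializesCx (φ : s.carrier →+* S) s.complex G)
    {φ' : (step n s).carrier →ₐ[ℂ] S} (hcomp : φ'.comp (stepAlgHom n s) = φ) :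
    SpecializesCx (φ' : (step n s).carrier →+* S) (step n s).complex G := by
  intro k
  ext i j
  have h := DFunLike.congr_fun hcomp (s.complex.d k i j)
  rw [← hφ k]
  exact h.trans rfl

lemma step_lift {s : AlgebraComplexPair f} (G : MatrixComplex S f) (hG : G.IsAcyclic n)
    (φ : s.carrier →ₐ[ℂ] S) (hφ : SpecializesCx (φ : s.carrier →+* S) s.complex G) :
    ∃ φ' : (step n s).carrier →ₐ[ℂ] S, φ'.comp (stepAlgHom n s) = φ := by
  classical
  have hcyc : ∀ c : CycleType n s, ∃ y : Fin (f ((c.1 : ℕ) + 2)) → S,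
      (G.d ((c.1 : ℕ) + 1)).mulVec y =
        fun i => (φ : s.carrier →+* S) (c.2.val i) := by
    rintro ⟨k, z, hz⟩
    have hker : (fun i => (φ : s.carrier →+* S) (z i)) ∈
        LinearMap.ker (G.d (k : ℕ)).mulVecLin := by
      rw [LinearMap.mem_ker]
      have h1 := mulVec_map (φ : s.carrier →+* S) (s.complex.d (k : ℕ)) z
      funext i
      rw [Matrix.mulVecLin_apply, ← hφ (k : ℕ), h1]
      rw [show (s.complex.d (k : ℕ)).mulVec z = 0 from hz]
      simp
    rw [hG (k : ℕ) k.isLt] at hker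
    obtain ⟨y, hy⟩ := hker
    exact ⟨y, hy⟩
  choose ych hych using hcyc
  set Ψ : MvPolynomial (StepVars n s) s.carrier →+* S :=
    MvPolynomial.eval₂Hom (φ : s.carrier →+* S) (fun v => ych v.1 v.2) with hΨ
  have hker : stepIdeal n s ≤ RingHom.ker Ψ := by
    rw [stepIdeal, Ideal.span_le]
    rintro p ⟨c, i, rfl⟩
    simp only [SetLike.mem_coe, RingHom.mem_ker, map_sub, map_sum, map_mul]
    have h1 : ∀ j, Ψ (MvPolynomial.C (s.complex.d ((c.1 : ℕ) + 1) i j)) =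
        G.d ((c.1 : ℕ) + 1) i j := by
      intro j
      rw [hΨ, MvPolynomial.eval₂Hom_C, ← hφ ((c.1 : ℕ) + 1)]
      rfl
    have h2 : ∀ j : Fin (f ((c.1 : ℕ) + 2)), Ψ (MvPolynomial.X (⟨c, j⟩ : StepVars n s)) =
        ych c j := fun j => by rw [hΨ]; exact MvPolynomial.eval₂Hom_X' _ _ _
    simp_rw [h1, h2]
    have h3 := congrFun (hych c) i
    simp only [Matrix.mulVec, dotProduct] at h3
    rw [hΨ, MvPolynomial.eval₂Hom_C, ← h3]
    ring
  set Φ' : (MvPolynomial (StepVars n s) s.carrier ⧸ stepIdeal n s) →+* S :=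
    Ideal.Quotient.lift (stepIdeal n s) Ψ (fun a ha => RingHom.mem_ker.1 (hker ha)) with hΦ'
  refine ⟨⟨Φ', ?_⟩, ?_⟩
  · intro c
    show Φ' (Ideal.Quotient.mk (stepIdeal n s) (algebraMap ℂ _ c)) = algebraMap ℂ S c
    rw [hΦ', Ideal.Quotient.lift_mk]
    have h4 : (algebraMap ℂ (MvPolynomial (StepVars n s) s.carrier) c) =
        MvPolynomial.C (algebraMap ℂ s.carrier c) := rfl
    rw [h4, hΨ, MvPolynomial.eval₂Hom_C]
    exact φ.commutes c
  · ext x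
    show Φ' (Ideal.Quotient.mk (stepIdeal n s) (MvPolynomial.C x)) = φ x
    rw [hΦ', Ideal.Quotient.lift_mk, hΨ, MvPolynomial.eval₂Hom_C]
    rfl


/-! ### The tower of stages and its direct limit -/

variable (f) in
def stages : ℕ → AlgebraComplexPair f
  | 0 => base f
  | (m + 1) => step n (stages m)

variable (f) in
/-- Transition maps of the tower. -/
def T : ∀ i j : ℕ, i ≤ j → (stages f n i).carrier →ₐ[ℂ] (stages f n j).carrier :=
  fun _ _ h => Nat.leRecOn h
    (fun {m} g => ((stepAlgHom n (stages f n m)).comp g :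
      _ →ₐ[ℂ] (stages f n (m + 1)).carrier)) (AlgHom.id ℂ _)

lemma T_self (i : ℕ) : T f n i i le_rfl = AlgHom.id ℂ _ := Nat.leRecOn_self _

lemma T_succ_of (i j : ℕ) (h : i ≤ j) :
    T f n i (j + 1) (h.trans (Nat.le_succ j)) =
      (stepAlgHom n (stages f n j)).comp (T f n i j h) := Nat.leRecOn_succ h _

lemma T_step (m : ℕ) : T f n m (m + 1) (Nat.le_succ m) = stepAlgHom n (stages f n m) := by
  rw [show (Nat.le_succ m) = ((le_rfl : m ≤ m).trans (Nat.le_succ m)) from rfl,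
    T_succ_of, T_self]
  rfl
  exact le_rfl

lemma T_trans (i j k : ℕ) (hij : i ≤ j) (hjk : j ≤ k) (x : (stages f n i).carrier) :
    T f n j k hjk (T f n i j hij x) = T f n i k (hij.trans hjk) x := by
  induction k, hjk using Nat.le_induction with
  | base => rw [T_self]; rfl
  | succ k hjk ih =>
      rw [T_succ_of n i k (hij.trans hjk), T_succ_of n j k hjk]
      show stepAlgHom n (stages f n k) (T f n j k hjk (T f n i j hij x)) =
        stepAlgHom n (stages f n k) (T f n i k (hij.trans hjk) x)
      exact congrArg _ ih

variable (f) in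
abbrev GG : ℕ → Type := fun m => (stages f n m).carrier

variable (f) in
def FF : ∀ i j : ℕ, i ≤ j → (GG f n i : Type) →+* GG f n j :=
  fun i j h => (T f n i j h).toRingHom

instance : DirectedSystem (GG f n) (fun i j h => FF f n i j h) where
  map_self i x := by
    show T f n i i le_rfl x = x
    rw [T_self]; rfl
  map_map := fun {k j i} hij hjk x => T_trans n i j k hij hjk x

variable (f) in
def Limit : Type := Ring.DirectLimit (GG f n) (fun i j h => FF f n i j h)

instance : CommRing (Limit f n) := by unfold Limit; infer_instance

variable (f) in
def ofL (m : ℕ) : (GG f n m) →+* Limit f n :=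
  Ring.DirectLimit.of (GG f n) (fun i j h => FF f n i j h) m

instance : Algebra ℂ (Limit f n) :=
  ((ofL f n 0).comp (algebraMap ℂ (GG f n 0))).toAlgebra

lemma ofL_f {i j : ℕ} (h : i ≤ j) (x : GG f n i) :
    ofL f n j (FF f n i j h x) = ofL f n i x :=
  Ring.DirectLimit.of_f h x

lemma ofL_algebraMap (m : ℕ) (c : ℂ) :
    ofL f n m (algebraMap ℂ _ c) = algebraMap ℂ (Limit f n) c := by
  have h1 : algebraMap ℂ (GG f n m) c =
      FF f n 0 m (Nat.zero_le m) (algebraMap ℂ (GG f n 0) c) :=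
    ((T f n 0 m (Nat.zero_le m)).commutes c).symm
  rw [h1, ofL_f]
  rfl

variable (f) in
/-- The canonical maps to the limit, as `ℂ`-algebra maps. -/
def ofLA (m : ℕ) : (GG f n m) →ₐ[ℂ] Limit f n :=
  { ofL f n m with commutes' := ofL_algebraMap n m }


variable (f) in
/-- The limit pair: the generic ring with its generic acyclic complex. -/
def limPair : AlgebraComplexPair f where
  carrier := Limit f n
  complex := MatrixComplex.mapHom (ofL f n 0) (stages f n 0).complex

lemma stepAlgHom_eq_FF (m : ℕ) (x : GG f n m) :
    stepAlgHom n (stages f n m) x = FF f n m (m + 1) (Nat.le_succ m) x := by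
  show stepAlgHom n (stages f n m) x = T f n m (m + 1) (Nat.le_succ m) x
  rw [T_step]
  rfl

lemma stages_d_map (i j : ℕ) (h : i ≤ j) (k : ℕ) :
    ((stages f n i).complex.d k).map (FF f n i j h) = (stages f n j).complex.d k := by
  induction j, h using Nat.le_induction with
  | base =>
      ext a b
      rw [Matrix.map_apply]
      show T f n i i le_rfl _ = _
      rw [T_self]
      rfl
  | succ j hij ih =>
      ext a b
      have hib : FF f n i j hij ((stages f n i).complex.d k a b) =
          (stages f n j).complex.d k a b := by rw [← ih]; rfl
      show T f n i (j + 1) (le_trans hij (Nat.le_succ j)) ((stages f n i).complex.d k a b) =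
        (stages f n (j + 1)).complex.d k a b
      rw [← T_trans n i j (j + 1) hij (Nat.le_succ j), T_step n j]
      have h2 : (stages f n (j + 1)).complex.d k a b =
          stepAlgHom n (stages f n j) ((stages f n j).complex.d k a b) := rfl
      rw [h2, ← hib]
      rfl

lemma limPair_d (m k : ℕ) :
    ((stages f n m).complex.d k).map (ofL f n m) = (limPair f n).complex.d k := by
  induction m with
  | zero => rfl
  | succ m ih =>
      rw [← ih]
      ext a b
      show ofL f n (m + 1) (stepAlgHom n (stages f n m) ((stages f n m).complex.d k a b)) =
        ofL f n m ((stages f n m).complex.d k a b)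
      rw [stepAlgHom_eq_FF]
      exact ofL_f n (Nat.le_succ m) _

lemma limPair_acyclic : (limPair f n).complex.IsAcyclic n := by
  classical
  intro k hk
  refine le_antisymm ?_ ?_
  · -- ker ≤ range
    rintro z hz
    rw [LinearMap.mem_ker, Matrix.mulVecLin_apply] at hz
    -- find a common stage for the coordinates of z
    have hex : ∀ i, ∃ m x, ofL f n m x = z i := fun i =>
      Ring.DirectLimit.exists_of (z i)
    choose ms xs hxs using hex
    set m := Finset.univ.sup ms with hm
    set w : Fin (f (k + 1)) → GG f n m :=
      fun i => FF f n (ms i) m (Finset.le_sup (Finset.mem_univ i)) (xs i) with hw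
    have hzw : ∀ i, ofL f n m (w i) = z i := fun i => (ofL_f n _ _).trans (hxs i)
    -- w is a cycle after mapping to the limit
    have hcyc0 : ∀ i, ofL f n m (((stages f n m).complex.d k).mulVec w i) = 0 := by
      intro i
      have h1 := congrFun (mulVec_map (ofL f n m) ((stages f n m).complex.d k) w) i
      rw [← h1, limPair_d, funext hzw]
      exact congrFun hz i
    -- hence w becomes a cycle at some common later stage M
    have hstep : ∀ i, ∃ m', ∃ h : m ≤ m',
        FF f n m m' h (((stages f n m).complex.d k).mulVec w i) = 0 := fun i =>
      Ring.DirectLimit.of.zero_exact (hcyc0 i)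
    choose m' hm' hzero using hstep
    set M := m ⊔ Finset.univ.sup m' with hM
    have hmM : m ≤ M := le_sup_left
    have hcycM : ((stages f n M).complex.d k).mulVec (fun i => FF f n m M hmM (w i)) = 0 := by
      funext i
      rw [← stages_d_map n m M hmM k]
      have h5 := congrFun (mulVec_map (FF f n m M hmM) ((stages f n m).complex.d k) w) i
      rw [h5]
      have h6 : m' i ≤ M := le_trans (Finset.le_sup (Finset.mem_univ i)) le_sup_right
      have h10 : FF f n m M hmM (((stages f n m).complex.d k).mulVec w i) = 0 := by
        have h11 := congrArg (FF f n (m' i) M h6) (hzero i)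
        rw [map_zero] at h11
        rw [← h11]
        exact (T_trans n m (m' i) M (hm' i) h6 _).symm
      exact h10
    -- the cycle, as a `CycleType` of stage M
    set c : CycleType n (stages f n M) :=
      ⟨⟨k, hk⟩, ⟨fun i => FF f n m M hmM (w i), hcycM⟩⟩ with hc
    obtain ⟨y, hy⟩ := step_boundary n (stages f n M) c
    refine ⟨fun j => ofL f n (M + 1) (y j), ?_⟩
    change ((limPair f n).complex.d (k + 1)).mulVec (fun j => ofL f n (M + 1) (y j)) = z
    funext i
    rw [← limPair_d n (M + 1) (k + 1)]
    have h7 := congrFun (mulVec_map (ofL f n (M + 1)) ((stages f n (M + 1)).complex.d (k + 1)) y) i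
    have h8 : (fun j => ofL f n (M + 1) (y j)) = ⇑(ofL f n (M + 1)) ∘ y := rfl
    rw [h8] at h7 ⊢
    refine h7.trans ?_
    have h9 := congrFun hy i
    rw [show ((step n (stages f n M)).complex.d ((c.1 : ℕ) + 1)) =
      (stages f n (M + 1)).complex.d (k + 1) from rfl] at h9
    refine (congrArg (ofL f n (M + 1)) h9).trans ?_
    rw [stepAlgHom_eq_FF, ofL_f, ofL_f]
    exact hzw i
  · -- range ≤ ker
    rintro _ ⟨u, rfl⟩
    rw [LinearMap.mem_ker, ← LinearMap.comp_apply, ← Matrix.mulVecLin_mul,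
      (limPair f n).complex.comp_eq_zero k]
    simp


/-! ### The universal specialization property of the limit -/

variable (f) in
noncomputable def Phi (G : MatrixComplex S f) (hG : G.IsAcyclic n) :
    ∀ m : ℕ, { ψ : (stages f n m).carrier →ₐ[ℂ] S //
      SpecializesCx (ψ : (stages f n m).carrier →+* S) (stages f n m).complex G }
  | 0 => ⟨(base_lift G).choose, (base_lift G).choose_spec⟩
  | (m + 1) =>
      ⟨(step_lift n G hG (Phi G hG m).1 (Phi G hG m).2).choose,
        specializes_step n (Phi G hG m).2
          (step_lift n G hG (Phi G hG m).1 (Phi G hG m).2).choose_spec⟩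

lemma Phi_succ (G : MatrixComplex S f) (hG : G.IsAcyclic n) (m : ℕ) :
    (Phi f n G hG (m + 1)).1.comp (stepAlgHom n (stages f n m)) = (Phi f n G hG m).1 :=
  (step_lift n G hG (Phi f n G hG m).1 (Phi f n G hG m).2).choose_spec

lemma Phi_compat (G : MatrixComplex S f) (hG : G.IsAcyclic n) (i j : ℕ) (h : i ≤ j)
    (x : (stages f n i).carrier) :
    (Phi f n G hG j).1 (T f n i j h x) = (Phi f n G hG i).1 x := by
  induction j, h using Nat.le_induction with
  | base => rw [T_self]; rfl
  | succ j hij ih =>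
      rw [T_succ_of n i j hij]
      show (Phi f n G hG (j + 1)).1 (stepAlgHom n (stages f n j) (T f n i j hij x)) = _
      rw [← ih]
      exact DFunLike.congr_fun (Phi_succ n G hG j) (T f n i j hij x)

lemma limit_lift (G : MatrixComplex S f) (hG : G.IsAcyclic n) :
    ∃ φ : (limPair f n).carrier →ₐ[ℂ] S,
      SpecializesCx (φ : (limPair f n).carrier →+* S) (limPair f n).complex G := by
  set φ₀ : Limit f n →+* S :=
    Ring.DirectLimit.lift (GG f n) (fun i j h => FF f n i j h) S
      (fun m => ((Phi f n G hG m).1 : (stages f n m).carrier →+* S))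
      (fun i j hij x => Phi_compat n G hG i j hij x) with hφ₀
  have hof : ∀ (m : ℕ) (x : GG f n m), φ₀ (ofL f n m x) = (Phi f n G hG m).1 x := fun m x =>
    Ring.DirectLimit.lift_of _ _ _ _ _
  refine ⟨⟨φ₀, ?_⟩, ?_⟩
  · intro c
    show φ₀ (ofL f n 0 (algebraMap ℂ (GG f n 0) c)) = algebraMap ℂ S c
    rw [hof]
    exact (Phi f n G hG 0).1.commutes c
  · intro k
    ext a b
    show φ₀ (ofL f n 0 ((stages f n 0).complex.d k a b)) = G.d k a b
    rw [hof]
    have := (Phi f n G hG 0).2 k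
    calc (Phi f n G hG 0).1 ((stages f n 0).complex.d k a b)
        = ((stages f n 0).complex.d k).map ((Phi f n G hG 0).1 :
            (stages f n 0).carrier →+* S) a b := rfl
      _ = G.d k a b := by rw [this]

end Bruns
end

theorem bruns_generic_pair_exists (n : ℕ) (hn : 1 ≤ n) (r : ℕ → ℕ) :
    ∃ U : AlgebraComplexPair (brunsFormat n r),
      U.complex.IsAcyclic n ∧
      ∀ (S : Type) (_ : CommRing S) (_ : Algebra ℂ S)
        (G : MatrixComplex S (brunsFormat n r)),
        G.IsAcyclic n →
        ∃ φ : U.carrier →ₐ[ℂ] S, SpecializesCx (φ : U.carrier →+* S) U.complex G := by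
  refine ⟨Bruns.limPair (brunsFormat n r) n, Bruns.limPair_acyclic n, ?_⟩
  intro S _ _ G hG
  exact Bruns.limit_lift n G hG
end
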